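/- Let G be a group and let A, B ⊆ G be nonempty finite sets. If VC^ℓ_B(A) ≤ d and ε ∈ (0,1), then cov(B : St^ℓ_ε(A)) ≤ (30|BA| / (ε|A|))^d; that is, there exists E ⊆ B with |E| ≤ (30|BA|/(ε|A|))^d such that B ⊆ E · St^ℓ_ε(A). -/

import Mathlib

open scoped Pointwise symmDiff

/-- `Stab^ℓ_N(A) = {x : |xA △ A| ≤ N}`. -/
def stabL {G : Type*} [Group G] (A : Set G) (N : ℝ) : Set G :=
  {x : G | (((x • A) ∆ A).ncard : ℝ) ≤ N}

/-- `Stab^r_N(A) = {x : |Ax △ A| ≤ N}`. -/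
def stabR {G : Type*} [Group G] (A : Set G) (N : ℝ) : Set G :=
  {x : G | (((A * {x}) ∆ A).ncard : ℝ) ≤ N}

/-- `St^ℓ_ε(A) = Stab^ℓ_{ε|A|}(A)`. -/
def stL {G : Type*} [Group G] (A : Set G) (ε : ℝ) : Set G := stabL A (ε * A.ncard)

/-- `St^r_ε(A) = Stab^r_{ε|A|}(A)`. -/
def stR {G : Type*} [Group G] (A : Set G) (ε : ℝ) : Set G := stabR A (ε * A.ncard)

/-- A family of sets shatters `S` if every subset of `S` is cut out by a member of the family. -/
def Shatters {α : Type*} (F : Set (Set α)) (S : Set α) : Prop :=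
  ∀ T ⊆ S, ∃ f ∈ F, S ∩ f = T

/-- VC-dimension of a set system: the supremum of cardinalities of finite shattered sets. -/
noncomputable def vcDim {α : Type*} (F : Set (Set α)) : ℕ∞ :=
  ⨆ (S : Finset α) (_ : Shatters F ↑S), (S.card : ℕ∞)

/-- The family of left translates `{xA : x ∈ B}`. -/
def leftFam {G : Type*} [Group G] (A B : Set G) : Set (Set G) := (fun x => x • A) '' B

/-- The family of right translates `{Ax : x ∈ B}`. -/
def rightFam {G : Type*} [Group G] (A B : Set G) : Set (Set G) := (fun x => A * {x}) '' B

/-- `Z^ℓ_ε(A,X) = {g : min(|gX ∩ A|, |gX \ A|) ≥ ε|X|}`. -/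
def Zl {G : Type*} [Group G] (A X : Set G) (ε : ℝ) : Set G :=
  {g : G | ε * X.ncard ≤ min (((g • X) ∩ A).ncard : ℝ) (((g • X) \ A).ncard : ℝ)}



namespace HausslerPack

open Finset

variable {α : Type*} [DecidableEq α]

/-- number of "unit distance edges" (counted via upper endpoint per direction). -/
def edgeCount (T : Finset α) (𝒜 : Finset (Finset α)) : ℕ :=
  ∑ x ∈ T, #(𝒜.filter fun A => x ∈ A ∧ A.erase x ∈ 𝒜)

theorem edgeCount_le (T : Finset α) :
    ∀ (d : ℕ) (𝒜 : Finset (Finset α)), (∀ A ∈ 𝒜, A ⊆ T) →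
    (∀ s : Finset α, 𝒜.Shatters s → s.card ≤ d) →
    edgeCount T 𝒜 ≤ d * 𝒜.card := by
  induction T using Finset.cons_induction with
  | empty => intro d 𝒜 hsub hvc; simp [edgeCount]
  | cons x₀ T hx₀ ih =>
    intro d 𝒜 hsub hvc
    set 𝒜₀ := 𝒜.nonMemberSubfamily x₀ with h𝒜₀
    set 𝒜₁ := 𝒜.memberSubfamily x₀ with h𝒜₁
    -- members of 𝒜₀, 𝒜₁ are subsets of T
    have hsub₀ : ∀ A ∈ 𝒜₀, A ⊆ T := by
      intro A hA
      rw [Finset.mem_nonMemberSubfamily] at hA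
      intro y hy
      have := hsub A hA.1 hy
      rw [Finset.mem_cons] at this
      rcases this with h | h
      · exact absurd (h ▸ hy) hA.2
      · exact h
    have hsub₁ : ∀ A ∈ 𝒜₁, A ⊆ T := by
      intro A hA
      rw [Finset.mem_memberSubfamily] at hA
      intro y hy
      have := hsub _ hA.1 (Finset.mem_insert_of_mem hy)
      rw [Finset.mem_cons] at this
      rcases this with h | h
      · exact absurd (h ▸ hy) hA.2
      · exact h
    -- VC bound for the union
    have hvcU : ∀ s : Finset α, (𝒜₀ ∪ 𝒜₁).Shatters s → s.card ≤ d := by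
      intro s hs
      apply hvc
      have hx₀s : x₀ ∉ s := by
        obtain ⟨u, hu, hsu⟩ := hs.exists_superset
        intro hmem
        rw [Finset.mem_union] at hu
        rcases hu with hu | hu
        · exact (Finset.mem_nonMemberSubfamily.1 hu).2 (hsu hmem)
        · exact (Finset.mem_memberSubfamily.1 hu).2 (hsu hmem)
      intro t ht
      obtain ⟨u, hu, hsu⟩ := hs ht
      rw [Finset.mem_union] at hu
      rcases hu with hu | hu
      · exact ⟨u, (Finset.mem_nonMemberSubfamily.1 hu).1, hsu⟩
      · refine ⟨insert x₀ u, (Finset.mem_memberSubfamily.1 hu).1, ?_⟩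
        rw [Finset.inter_insert_of_notMem hx₀s, hsu]
    -- VC bound for the intersection
    have hvcI : ∀ s : Finset α, (𝒜₀ ∩ 𝒜₁).Shatters s → s.card + 1 ≤ d := by
      intro s hs
      have hx₀s : x₀ ∉ s := by
        obtain ⟨u, hu, hsu⟩ := hs.exists_superset
        rw [Finset.mem_inter] at hu
        exact fun hmem => (Finset.mem_nonMemberSubfamily.1 hu.1).2 (hsu hmem)
      have : (insert x₀ s).card ≤ d := by
        apply hvc
        intro t ht
        by_cases hx₀t : x₀ ∈ t
        · obtain ⟨u, hu, hsu⟩ := hs (show t.erase x₀ ⊆ s by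
            intro y hy
            rw [Finset.mem_erase] at hy
            have := ht hy.2
            rw [Finset.mem_insert] at this
            tauto)
          rw [Finset.mem_inter] at hu
          have hx₀u : x₀ ∉ u := (Finset.mem_memberSubfamily.1 hu.2).2
          refine ⟨insert x₀ u, (Finset.mem_memberSubfamily.1 hu.2).1, ?_⟩
          rw [← Finset.insert_inter_distrib, hsu, Finset.insert_erase hx₀t]
        · obtain ⟨u, hu, hsu⟩ := hs (show t ⊆ s by
            intro y hy
            have := ht hy
            rw [Finset.mem_insert] at this
            rcases this with h | h
            · exact absurd (h ▸ hy) hx₀t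
            · exact h)
          rw [Finset.mem_inter] at hu
          have hx₀u : x₀ ∉ u := (Finset.mem_nonMemberSubfamily.1 hu.1).2
          refine ⟨u, (Finset.mem_nonMemberSubfamily.1 hu.1).1, ?_⟩
          rw [Finset.insert_inter_of_notMem hx₀u, hsu]
      rwa [Finset.card_insert_of_notMem hx₀s] at this
    -- cardinality bookkeeping
    have hcard : #𝒜₁ + #𝒜₀ = #𝒜 :=
      Finset.card_memberSubfamily_add_card_nonMemberSubfamily x₀ 𝒜
    have hcardUI : #(𝒜₀ ∪ 𝒜₁) + #(𝒜₀ ∩ 𝒜₁) = #𝒜 := by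
      rw [Finset.card_union_add_card_inter]; omega
    -- the x₀ term
    have hex₀ : #(𝒜.filter fun A => x₀ ∈ A ∧ A.erase x₀ ∈ 𝒜) = #(𝒜₀ ∩ 𝒜₁) := by
      apply Finset.card_nbij (fun A => A.erase x₀)
      · intro A hA
        simp only [Finset.mem_coe, Finset.mem_filter] at hA
        refine Finset.mem_coe.2 (Finset.mem_inter.2 ⟨?_, ?_⟩)
        · rw [h𝒜₀, Finset.mem_nonMemberSubfamily]
          exact ⟨hA.2.2, Finset.notMem_erase _ _⟩
        · rw [h𝒜₁, Finset.mem_memberSubfamily]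
          exact ⟨by rw [Finset.insert_erase hA.2.1]; exact hA.1, Finset.notMem_erase _ _⟩
      · intro A hA B hB hAB
        simp only [Finset.mem_coe, Finset.mem_filter] at hA hB
        have h2 : insert x₀ (A.erase x₀) = insert x₀ (B.erase x₀) := congrArg (insert x₀) hAB
        rwa [Finset.insert_erase hA.2.1, Finset.insert_erase hB.2.1] at h2
      · intro B hB
        simp only [Finset.mem_coe, Finset.mem_inter, h𝒜₀, h𝒜₁,
          Finset.mem_nonMemberSubfamily, Finset.mem_memberSubfamily] at hB
        obtain ⟨⟨hB𝒜, hx₀B⟩, hiB, -⟩ := hB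
        refine ⟨insert x₀ B, ?_, ?_⟩
        · simp only [Finset.mem_coe, Finset.mem_filter]
          exact ⟨hiB, Finset.mem_insert_self _ _, by rwa [Finset.erase_insert hx₀B]⟩
        · show (insert x₀ B).erase x₀ = B
          rw [Finset.erase_insert hx₀B]
    -- per-direction bound for x ∈ T
    have hbound : ∀ x ∈ T, #(𝒜.filter fun A => x ∈ A ∧ A.erase x ∈ 𝒜)
        ≤ #((𝒜₀ ∪ 𝒜₁).filter fun A => x ∈ A ∧ A.erase x ∈ 𝒜₀ ∪ 𝒜₁)
          + #((𝒜₀ ∩ 𝒜₁).filter fun A => x ∈ A ∧ A.erase x ∈ 𝒜₀ ∩ 𝒜₁) := by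
      intro x hxT
      have hxx₀ : x ≠ x₀ := fun h => hx₀ (h ▸ hxT)
      set F₀ := 𝒜₀.filter (fun A => x ∈ A ∧ A.erase x ∈ 𝒜₀) with hF₀
      set F₁ := 𝒜₁.filter (fun A => x ∈ A ∧ A.erase x ∈ 𝒜₁) with hF₁
      have hsplit : #(𝒜.filter fun A => x ∈ A ∧ A.erase x ∈ 𝒜) =
          #((𝒜.filter fun A => x ∈ A ∧ A.erase x ∈ 𝒜).filter fun A => x₀ ∉ A) +
          #((𝒜.filter fun A => x ∈ A ∧ A.erase x ∈ 𝒜).filter fun A => x₀ ∈ A) := by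
        rw [add_comm, Finset.card_filter_add_card_filter_not]
      have h0 : ((𝒜.filter fun A => x ∈ A ∧ A.erase x ∈ 𝒜).filter fun A => x₀ ∉ A) = F₀ := by
        ext A
        simp only [hF₀, h𝒜₀, Finset.mem_filter, Finset.mem_nonMemberSubfamily]
        constructor
        · rintro ⟨⟨hA, hxA, hAe⟩, hx₀A⟩
          exact ⟨⟨hA, hx₀A⟩, hxA, hAe, fun h => hx₀A (Finset.mem_of_mem_erase h)⟩
        · rintro ⟨⟨hA, hx₀A⟩, hxA, hAe, _⟩
          exact ⟨⟨hA, hxA, hAe⟩, hx₀A⟩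
      have h1 : #((𝒜.filter fun A => x ∈ A ∧ A.erase x ∈ 𝒜).filter fun A => x₀ ∈ A) ≤ #F₁ := by
        apply Finset.card_le_card_of_injOn (fun A => A.erase x₀)
        · intro A hA
          simp only [Finset.mem_coe, Finset.mem_filter] at hA
          obtain ⟨⟨hA𝒜, hxA, hAe⟩, hx₀A⟩ := hA
          simp only [Finset.mem_coe, hF₁, h𝒜₁, Finset.mem_filter, Finset.mem_memberSubfamily]
          refine ⟨⟨by rwa [Finset.insert_erase hx₀A], Finset.notMem_erase _ _⟩,
            Finset.mem_erase.2 ⟨hxx₀, hxA⟩, ?_,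
            fun h => Finset.notMem_erase x₀ A (Finset.mem_of_mem_erase h)⟩
          rw [Finset.erase_right_comm]
          rwa [Finset.insert_erase (Finset.mem_erase.2 ⟨Ne.symm hxx₀, hx₀A⟩)]
        · intro A hA B hB hAB
          simp only [Finset.mem_coe, Finset.mem_filter] at hA hB
          have h2 : insert x₀ (A.erase x₀) = insert x₀ (B.erase x₀) := congrArg (insert x₀) hAB
          rwa [Finset.insert_erase hA.2, Finset.insert_erase hB.2] at h2
      calc #(𝒜.filter fun A => x ∈ A ∧ A.erase x ∈ 𝒜) ≤ #F₀ + #F₁ := by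
            rw [hsplit, h0]; exact Nat.add_le_add_left h1 _
        _ = #(F₀ ∪ F₁) + #(F₀ ∩ F₁) := (Finset.card_union_add_card_inter _ _).symm
        _ ≤ _ := by
            apply Nat.add_le_add <;> apply Finset.card_le_card
            · intro A hA
              rw [Finset.mem_union] at hA
              simp only [hF₀, hF₁, Finset.mem_filter] at hA
              simp only [Finset.mem_filter, Finset.mem_union]
              rcases hA with ⟨h1', h2', h3'⟩ | ⟨h1', h2', h3'⟩
              · exact ⟨Or.inl h1', h2', Or.inl h3'⟩
              · exact ⟨Or.inr h1', h2', Or.inr h3'⟩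
            · intro A hA
              rw [Finset.mem_inter] at hA
              simp only [hF₀, hF₁, Finset.mem_filter] at hA
              simp only [Finset.mem_filter, Finset.mem_inter]
              exact ⟨⟨hA.1.1, hA.2.1⟩, hA.1.2.1, hA.1.2.2, hA.2.2.2⟩
    -- assemble
    have hU := ih d (𝒜₀ ∪ 𝒜₁) (fun A hA => by
      rcases Finset.mem_union.1 hA with h | h
      exacts [hsub₀ A h, hsub₁ A h]) hvcU
    have hI := ih (d - 1) (𝒜₀ ∩ 𝒜₁) (fun A hA => hsub₀ A (Finset.mem_inter.1 hA).1)
      (fun s hs => by have := hvcI s hs; omega)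
    have hE : edgeCount (Finset.cons x₀ T hx₀) 𝒜 =
        #(𝒜.filter fun A => x₀ ∈ A ∧ A.erase x₀ ∈ 𝒜) +
        ∑ x ∈ T, #(𝒜.filter fun A => x ∈ A ∧ A.erase x ∈ 𝒜) := by
      rw [edgeCount, Finset.sum_cons]
    rw [hE, hex₀]
    have hsum : ∑ x ∈ T, #(𝒜.filter fun A => x ∈ A ∧ A.erase x ∈ 𝒜)
        ≤ edgeCount T (𝒜₀ ∪ 𝒜₁) + edgeCount T (𝒜₀ ∩ 𝒜₁) := by
      rw [edgeCount, edgeCount, ← Finset.sum_add_distrib]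
      exact Finset.sum_le_sum hbound
    have hfin : #(𝒜₀ ∩ 𝒜₁) + (d * #(𝒜₀ ∪ 𝒜₁) + (d - 1) * #(𝒜₀ ∩ 𝒜₁)) ≤ d * #𝒜 := by
      rcases Finset.eq_empty_or_nonempty (𝒜₀ ∩ 𝒜₁) with h | h
      · rw [h]
        simp only [Finset.card_empty, Nat.mul_zero, Nat.add_zero, Nat.zero_add]
        rw [← hcardUI, h]
        simp [Nat.mul_add]
      · have hd1 : 1 ≤ d := by
          have := hvcI ∅ (Finset.shatters_empty.2 h)
          simpa using this
        have heq : #(𝒜₀ ∩ 𝒜₁) + (d - 1) * #(𝒜₀ ∩ 𝒜₁) = d * #(𝒜₀ ∩ 𝒜₁) := by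
          obtain ⟨k, rfl⟩ := Nat.exists_eq_add_of_le hd1
          simp only [Nat.add_sub_cancel_left]
          ring
        apply le_of_eq
        calc #(𝒜₀ ∩ 𝒜₁) + (d * #(𝒜₀ ∪ 𝒜₁) + (d - 1) * #(𝒜₀ ∩ 𝒜₁))
            = d * #(𝒜₀ ∪ 𝒜₁) + (#(𝒜₀ ∩ 𝒜₁) + (d - 1) * #(𝒜₀ ∩ 𝒜₁)) := by ring
          _ = d * #(𝒜₀ ∪ 𝒜₁) + d * #(𝒜₀ ∩ 𝒜₁) := by rw [heq]
          _ = d * (#(𝒜₀ ∪ 𝒜₁) + #(𝒜₀ ∩ 𝒜₁)) := by ring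
          _ = d * #𝒜 := by rw [hcardUI]
    calc #(𝒜₀ ∩ 𝒜₁) + ∑ x ∈ T, #(𝒜.filter fun A => x ∈ A ∧ A.erase x ∈ 𝒜)
        ≤ #(𝒜₀ ∩ 𝒜₁) + (edgeCount T (𝒜₀ ∪ 𝒜₁) + edgeCount T (𝒜₀ ∩ 𝒜₁)) :=
          Nat.add_le_add_left hsum _
      _ ≤ #(𝒜₀ ∩ 𝒜₁) + (d * #(𝒜₀ ∪ 𝒜₁) + (d - 1) * #(𝒜₀ ∩ 𝒜₁)) :=
          Nat.add_le_add_left (Nat.add_le_add hU hI) _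
      _ ≤ d * #𝒜 := hfin

/-- Weighted unit-distance edge bound. -/
theorem edgeCount_weighted (T : Finset α) (d : ℕ) :
    ∀ (W : ℕ) (𝒜 : Finset (Finset α)) (w : Finset α → ℕ),
    (∀ A ∈ 𝒜, A ⊆ T) → (∀ s : Finset α, 𝒜.Shatters s → s.card ≤ d) →
    (∀ A, A ∉ 𝒜 → w A = 0) → (∑ A ∈ 𝒜, w A = W) →
    (∑ x ∈ T, ∑ A ∈ 𝒜.filter (fun A => x ∈ A), min (w A) (w (A.erase x)))
      ≤ d * ∑ A ∈ 𝒜, w A := by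
  intro W
  induction W using Nat.strong_induction_on with
  | _ W ih =>
    intro 𝒜 w hsub hvc hw0 hWsum
    rcases Nat.eq_zero_or_pos W with hW | hW
    · have hz : ∀ A ∈ 𝒜, w A = 0 := by
        intro A hA
        have := hWsum.trans hW
        exact Finset.sum_eq_zero_iff.1 this A hA
      have : ∀ x ∈ T, ∑ A ∈ 𝒜.filter (fun A => x ∈ A), min (w A) (w (A.erase x)) = 0 := by
        intro x hx
        apply Finset.sum_eq_zero
        intro A hA
        rw [hz A (Finset.mem_filter.1 hA).1]
        simp
      rw [Finset.sum_congr rfl this]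
      simp
    · set 𝒜p := 𝒜.filter (fun A => w A ≠ 0) with h𝒜p
      set w' : Finset α → ℕ := fun A => if A ∈ 𝒜p then w A - 1 else 0 with hw'
      have hmemp : ∀ A, w A ≠ 0 → A ∈ 𝒜p := by
        intro A hA
        rw [h𝒜p, Finset.mem_filter]
        refine ⟨?_, hA⟩
        by_contra h
        exact hA (hw0 A h)
      -- pointwise bound
      have hpt : ∀ x, ∀ A ∈ 𝒜.filter (fun A => x ∈ A),
          min (w A) (w (A.erase x)) ≤
          (if A ∈ 𝒜p ∧ A.erase x ∈ 𝒜p then 1 else 0) + min (w' A) (w' (A.erase x)) := by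
        intro x A _
        rcases Nat.eq_zero_or_pos (w A) with h1 | h1
        · simp [h1]
        rcases Nat.eq_zero_or_pos (w (A.erase x)) with h2 | h2
        · simp [h2]
        have hA : A ∈ 𝒜p := hmemp A (Nat.pos_iff_ne_zero.1 h1)
        have hAe : A.erase x ∈ 𝒜p := hmemp _ (Nat.pos_iff_ne_zero.1 h2)
        rw [if_pos ⟨hA, hAe⟩, hw']
        simp only [if_pos hA, if_pos hAe]
        omega
      have hsum1 : ∀ x, ∑ A ∈ 𝒜.filter (fun A => x ∈ A),
          (if A ∈ 𝒜p ∧ A.erase x ∈ 𝒜p then 1 else 0)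
          = #(𝒜p.filter fun A => x ∈ A ∧ A.erase x ∈ 𝒜p) := by
        intro x
        rw [← Finset.card_filter]
        congr 1
        ext A
        simp only [Finset.mem_filter, h𝒜p]
        tauto
      -- the three pieces
      have hedge : edgeCount T 𝒜p ≤ d * #𝒜p := by
        apply edgeCount_le
        · exact fun A hA => hsub A (Finset.mem_filter.1 hA).1
        · exact fun s hs => hvc s (hs.mono_left (Finset.filter_subset _ _))
      have hApne : ∃ A ∈ 𝒜, w A ≠ 0 := by
        by_contra h
        push_neg at h
        rw [Finset.sum_congr rfl h] at hWsum
        simp at hWsum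
        omega
      have hWlt : ∑ A ∈ 𝒜, w' A < W := by
        rw [← hWsum]
        obtain ⟨A₀, hA₀, hwA₀⟩ := hApne
        apply Finset.sum_lt_sum
        · intro A hA
          simp only [hw']
          split
          · omega
          · exact Nat.zero_le _
        · refine ⟨A₀, hA₀, ?_⟩
          simp only [hw']
          rw [if_pos (hmemp A₀ hwA₀)]
          have := Nat.pos_of_ne_zero hwA₀
          omega
      have hih := ih _ hWlt 𝒜 w' hsub hvc
        (fun A hA => by
          simp only [hw']
          rw [if_neg (fun h => hA (Finset.mem_filter.1 h).1)]) rfl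
      have hfinal : d * #𝒜p + d * ∑ A ∈ 𝒜, w' A = d * ∑ A ∈ 𝒜, w A := by
        rw [← Nat.mul_add]
        congr 1
        rw [h𝒜p, Finset.card_filter, ← Finset.sum_add_distrib]
        apply Finset.sum_congr rfl
        intro A hA
        simp only [hw']
        by_cases hwA : w A = 0
        · rw [if_neg (show ¬w A ≠ 0 by simp [hwA]),
            if_neg (fun h => by exact (Finset.mem_filter.1 h).2 hwA)]
          omega
        · rw [if_pos hwA, if_pos (hmemp A hwA)]
          have := Nat.pos_of_ne_zero hwA
          omega
      calc ∑ x ∈ T, ∑ A ∈ 𝒜.filter (fun A => x ∈ A), min (w A) (w (A.erase x))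
          ≤ ∑ x ∈ T, ∑ A ∈ 𝒜.filter (fun A => x ∈ A),
            ((if A ∈ 𝒜p ∧ A.erase x ∈ 𝒜p then 1 else 0) + min (w' A) (w' (A.erase x))) :=
            Finset.sum_le_sum (fun x _ => Finset.sum_le_sum (hpt x))
        _ = edgeCount T 𝒜p
            + ∑ x ∈ T, ∑ A ∈ 𝒜.filter (fun A => x ∈ A), min (w' A) (w' (A.erase x)) := by
            rw [edgeCount, ← Finset.sum_add_distrib]
            apply Finset.sum_congr rfl
            intro x _
            rw [Finset.sum_add_distrib, hsum1 x]
        _ ≤ d * #𝒜p + d * ∑ A ∈ 𝒜, w' A := Nat.add_le_add hedge hih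
        _ = d * ∑ A ∈ 𝒜, w A := hfinal

theorem trace_shatters {𝒞 : Finset (Finset α)} {T s : Finset α}
    (hs : (𝒞.image (· ∩ T)).Shatters s) : 𝒞.Shatters s ∧ s ⊆ T := by
  have hsT : s ⊆ T := by
    obtain ⟨u, hu, hsu⟩ := hs.exists_superset
    obtain ⟨C, _, rfl⟩ := Finset.mem_image.1 hu
    exact hsu.trans Finset.inter_subset_right
  refine ⟨?_, hsT⟩
  intro t ht
  obtain ⟨u, hu, hsu⟩ := hs ht
  obtain ⟨C, hC, rfl⟩ := Finset.mem_image.1 hu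
  refine ⟨C, hC, ?_⟩
  rw [← hsu]
  ext y
  simp only [Finset.mem_inter]
  constructor
  · rintro ⟨h1, h2⟩
    exact ⟨h1, h2, hsT h1⟩
  · tauto

theorem card_trace_le {𝒞 : Finset (Finset α)} (S : Finset α) {d : ℕ}
    (hvc : ∀ s : Finset α, 𝒞.Shatters s → #s ≤ d) :
    #(𝒞.image (· ∩ S)) ≤ ∑ k ∈ Finset.Iic d, (#S).choose k := by
  set 𝒜 := 𝒞.image (· ∩ S) with h𝒜
  calc #𝒜 ≤ #𝒜.shatterer := Finset.card_le_card_shatterer 𝒜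
    _ ≤ #((Finset.Iic d).biUnion fun k => S.powersetCard k) := by
        apply Finset.card_le_card
        intro s hs
        rw [Finset.mem_shatterer] at hs
        obtain ⟨h1, h2⟩ := trace_shatters (𝒞 := 𝒞) (T := S) (s := s) hs
        rw [Finset.mem_biUnion]
        exact ⟨#s, Finset.mem_Iic.2 (hvc s h1), Finset.mem_powersetCard.2 ⟨h2, rfl⟩⟩
    _ ≤ ∑ k ∈ Finset.Iic d, #(S.powersetCard k) := Finset.card_biUnion_le
    _ = ∑ k ∈ Finset.Iic d, (#S).choose k := by
        simp [Finset.card_powersetCard]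

theorem sum_choose_le_pow {d n : ℕ} (hd : 1 ≤ d) (hdn : d ≤ n) :
    ((∑ k ∈ Finset.Iic d, n.choose k : ℕ) : ℝ) ≤ (Real.exp 1 * n / d) ^ d := by
  have hn1 : 1 ≤ n := hd.trans hdn
  have hn0 : (0:ℝ) < n := by exact_mod_cast hn1
  have hd0 : (0:ℝ) < d := by exact_mod_cast hd
  set r : ℝ := (d:ℝ) / n with hr
  have hr0 : 0 < r := by positivity
  have hr1 : r ≤ 1 := by
    rw [hr, div_le_one hn0]
    exact_mod_cast hdn
  have step1 : ((∑ k ∈ Finset.Iic d, n.choose k : ℕ) : ℝ) * r ^ d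
      ≤ ∑ k ∈ Finset.Iic d, (n.choose k : ℝ) * r ^ k := by
    push_cast
    rw [Finset.sum_mul]
    apply Finset.sum_le_sum
    intro k hk
    exact mul_le_mul_of_nonneg_left
      (pow_le_pow_of_le_one (le_of_lt hr0) hr1 (Finset.mem_Iic.1 hk)) (by positivity)
  have step2 : ∑ k ∈ Finset.Iic d, (n.choose k : ℝ) * r ^ k ≤ (1 + r) ^ n := by
    have hexp : (1 + r)^n = ∑ k ∈ Finset.range (n+1), (n.choose k : ℝ) * r ^ k := by
      rw [add_comm 1 r, add_pow]
      apply Finset.sum_congr rfl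
      intro k _
      ring
    rw [hexp]
    apply Finset.sum_le_sum_of_subset_of_nonneg
    · intro k hk
      rw [Finset.mem_range]
      have h2 := Finset.mem_Iic.1 hk
      omega
    · intro k _ _
      positivity
  have step3 : (1 + r) ^ n ≤ Real.exp 1 ^ d := by
    calc (1+r)^n ≤ (Real.exp r)^n :=
          pow_le_pow_left₀ (by positivity) (by linarith [Real.add_one_le_exp r]) n
      _ = Real.exp (r * n) := by rw [← Real.exp_nat_mul]; ring_nf
      _ = Real.exp d := by
          congr 1
          rw [hr]
          field_simp
      _ = Real.exp 1 ^ d := by rw [← Real.exp_nat_mul]; ring_nf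
  have h4 : ((∑ k ∈ Finset.Iic d, n.choose k : ℕ) : ℝ) * r ^ d ≤ Real.exp 1 ^ d :=
    le_trans step1 (le_trans step2 step3)
  have hrd : (0:ℝ) < r ^ d := by positivity
  have key : (Real.exp 1 * n / d : ℝ) ^ d * r ^ d = Real.exp 1 ^ d := by
    rw [← mul_pow]
    congr 1
    rw [hr]
    field_simp
  apply le_of_mul_le_mul_right _ hrd
  rw [key]
  exact h4

/-- weight of a trace. -/
def wt (𝒞 : Finset (Finset α)) (T t : Finset α) : ℕ := #(𝒞.filter fun C => C ∩ T = t)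

/-- weighted count of split classes in direction `x`. -/
def FF (𝒞 : Finset (Finset α)) (T : Finset α) (x : α) : ℕ :=
  ∑ t ∈ (𝒞.image (· ∩ T)).filter (fun t => x ∈ t), min (wt 𝒞 T t) (wt 𝒞 T (t.erase x))

theorem sum_FF_le {𝒞 : Finset (Finset α)} {d : ℕ}
    (hvc : ∀ s : Finset α, 𝒞.Shatters s → #s ≤ d) (T : Finset α) :
    ∑ x ∈ T, FF 𝒞 T x ≤ d * #𝒞 := by
  have hws : ∑ t ∈ 𝒞.image (· ∩ T), wt 𝒞 T t = #𝒞 :=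
    (Finset.card_eq_sum_card_image (· ∩ T) 𝒞).symm
  have h := edgeCount_weighted T d (∑ t ∈ 𝒞.image (· ∩ T), wt 𝒞 T t)
    (𝒞.image (· ∩ T)) (wt 𝒞 T)
    (fun A hA => by
      obtain ⟨C, _, rfl⟩ := Finset.mem_image.1 hA
      exact Finset.inter_subset_right)
    (fun s hs => hvc s (trace_shatters hs).1)
    (fun A hA => by
      rw [wt, Finset.card_eq_zero, Finset.filter_eq_empty_iff]
      intro C hC h
      exact hA (Finset.mem_image.2 ⟨C, hC, h⟩))
    rfl
  rw [hws] at h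
  exact h

theorem Mlow {𝒞 : Finset (Finset α)} {S : Finset α} {x : α} (hx : x ∉ S) :
    ∑ u ∈ 𝒞.image (· ∩ S),
      min (#(𝒞.filter fun C => C ∩ S = u ∧ x ∈ C)) (#(𝒞.filter fun C => C ∩ S = u ∧ x ∉ C))
      ≤ FF 𝒞 (insert x S) x := by
  classical
  set T := insert x S with hT
  set a : Finset α → ℕ := fun u => #(𝒞.filter fun C => C ∩ S = u ∧ x ∈ C) with ha
  set b : Finset α → ℕ := fun u => #(𝒞.filter fun C => C ∩ S = u ∧ x ∉ C) with hb
  have hsubS : ∀ u ∈ 𝒞.image (· ∩ S), u ⊆ S := by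
    intro u hu
    obtain ⟨C, _, rfl⟩ := Finset.mem_image.1 hu
    exact Finset.inter_subset_right
  have hiff1 : ∀ (u : Finset α), u ⊆ S → ∀ C : Finset α,
      (C ∩ T = insert x u) ↔ (C ∩ S = u ∧ x ∈ C) := by
    intro u huS C
    have hxu : x ∉ u := fun h => hx (huS h)
    constructor
    · intro h
      have hxC : x ∈ C := by
        have : x ∈ C ∩ T := by rw [h]; exact Finset.mem_insert_self _ _
        exact (Finset.mem_inter.1 this).1
      refine ⟨?_, hxC⟩
      ext y
      simp only [Finset.mem_inter]
      constructor
      · rintro ⟨hyC, hyS⟩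
        have : y ∈ C ∩ T := Finset.mem_inter.2 ⟨hyC, by rw [hT]; exact Finset.mem_insert_of_mem hyS⟩
        rw [h, Finset.mem_insert] at this
        rcases this with rfl | h'
        · exact absurd hyS hx
        · exact h'
      · intro hyu
        exact ⟨by
          have : y ∈ C ∩ T := by rw [h]; exact Finset.mem_insert_of_mem hyu
          exact (Finset.mem_inter.1 this).1, huS hyu⟩
    · rintro ⟨hCS, hxC⟩
      ext y
      simp only [Finset.mem_inter, hT, Finset.mem_insert]
      constructor
      · rintro ⟨hyC, rfl | hyS⟩
        · exact Or.inl rfl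
        · refine Or.inr ?_
          rw [← hCS]
          exact Finset.mem_inter.2 ⟨hyC, hyS⟩
      · rintro (rfl | hyu)
        · exact ⟨hxC, Or.inl rfl⟩
        · have : y ∈ C ∩ S := by rw [hCS]; exact hyu
          rw [Finset.mem_inter] at this
          exact ⟨this.1, Or.inr this.2⟩
  have hiff2 : ∀ (u : Finset α), u ⊆ S → ∀ C : Finset α,
      (C ∩ T = u) ↔ (C ∩ S = u ∧ x ∉ C) := by
    intro u huS C
    have hxu : x ∉ u := fun h => hx (huS h)
    constructor
    · intro h
      have hxC : x ∉ C := by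
        intro hxC
        have : x ∈ C ∩ T := Finset.mem_inter.2 ⟨hxC, by rw [hT]; exact Finset.mem_insert_self _ _⟩
        rw [h] at this
        exact hxu this
      refine ⟨?_, hxC⟩
      rw [← h]
      ext y
      simp only [Finset.mem_inter, hT, Finset.mem_insert]
      constructor
      · rintro ⟨hyC, hyS⟩
        exact ⟨hyC, Or.inr hyS⟩
      · rintro ⟨hyC, rfl | hyS⟩
        · exact absurd hyC hxC
        · exact ⟨hyC, hyS⟩
    · rintro ⟨hCS, hxC⟩
      rw [← hCS]
      ext y
      simp only [Finset.mem_inter, hT, Finset.mem_insert]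
      constructor
      · rintro ⟨hyC, rfl | hyS⟩
        · exact absurd hyC hxC
        · exact ⟨hyC, hyS⟩
      · rintro ⟨hyC, hyS⟩
        exact ⟨hyC, Or.inr hyS⟩
  -- restrict to nonzero `a`
  set U' := (𝒞.image (· ∩ S)).filter (fun u => a u ≠ 0) with hU'
  have hrestrict : ∑ u ∈ 𝒞.image (· ∩ S), min (a u) (b u) = ∑ u ∈ U', min (a u) (b u) := by
    symm
    apply Finset.sum_subset (Finset.filter_subset _ _)
    intro u hu hnu
    have haz : a u = 0 := by
      by_contra h
      exact hnu (Finset.mem_filter.2 ⟨hu, h⟩)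
    rw [haz]
    simp
  -- the image sum
  have himg : ∑ u ∈ U', min (a u) (b u)
      = ∑ t ∈ U'.image (insert x), min (wt 𝒞 T t) (wt 𝒞 T (t.erase x)) := by
    rw [Finset.sum_image]
    · apply Finset.sum_congr rfl
      intro u hu
      have huS : u ⊆ S := hsubS u (Finset.mem_filter.1 (hU' ▸ hu)).1
      have hxu : x ∉ u := fun h => hx (huS h)
      have e1 : wt 𝒞 T (insert x u) = a u := by
        rw [wt, ha]
        congr 1
        apply Finset.filter_congr
        intro C _
        exact hiff1 u huS C
      have e2 : wt 𝒞 T ((insert x u).erase x) = b u := by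
        rw [Finset.erase_insert hxu, wt, hb]
        congr 1
        apply Finset.filter_congr
        intro C _
        exact hiff2 u huS C
      rw [e1, e2]
    · intro u hu v hv h
      have huS : u ⊆ S := hsubS u (Finset.mem_filter.1 (hU' ▸ hu)).1
      have hvS : v ⊆ S := hsubS v (Finset.mem_filter.1 (hU' ▸ hv)).1
      have h2 : (insert x u).erase x = (insert x v).erase x := by rw [h]
      rwa [Finset.erase_insert (fun hh => hx (huS hh)),
        Finset.erase_insert (fun hh => hx (hvS hh))] at h2
  have hsubimg : U'.image (insert x) ⊆ (𝒞.image (· ∩ T)).filter (fun t => x ∈ t) := by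
    intro t ht
    obtain ⟨u, hu, rfl⟩ := Finset.mem_image.1 ht
    rw [hU', Finset.mem_filter] at hu
    obtain ⟨huI, hune⟩ := hu
    have huS : u ⊆ S := hsubS u huI
    obtain ⟨C, hC⟩ := Finset.card_pos.1 (Nat.pos_of_ne_zero hune)
    rw [Finset.mem_filter] at hC
    rw [Finset.mem_filter]
    refine ⟨Finset.mem_image.2 ⟨C, hC.1, ?_⟩, Finset.mem_insert_self _ _⟩
    exact (hiff1 u huS C).2 hC.2
  calc ∑ u ∈ 𝒞.image (· ∩ S), min (a u) (b u)
      = ∑ t ∈ U'.image (insert x), min (wt 𝒞 T t) (wt 𝒞 T (t.erase x)) := by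
        rw [hrestrict, himg]
    _ ≤ FF 𝒞 T x := Finset.sum_le_sum_of_subset hsubimg

open scoped symmDiff in
theorem class_lower {𝒞 : Finset (Finset α)} {Ω S u : Finset α} {D : ℝ}
    (hsub : ∀ C ∈ 𝒞, C ⊆ Ω)
    (hsep : ∀ C ∈ 𝒞, ∀ C' ∈ 𝒞, C ≠ C' → D ≤ ((C ∆ C').card : ℝ))
    (hD : 0 ≤ D)
    (hu : u ∈ 𝒞.image (· ∩ S)) :
    D / 2 * ((#(𝒞.filter fun C => C ∩ S = u) : ℝ) - 1)
      ≤ ∑ x ∈ Ω \ S, (min (#(𝒞.filter fun C => C ∩ S = u ∧ x ∈ C))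
          (#(𝒞.filter fun C => C ∩ S = u ∧ x ∉ C)) : ℝ) := by
  classical
  set K := 𝒞.filter (fun C => C ∩ S = u) with hK
  set k := #K with hk
  have hK𝒞 : K ⊆ 𝒞 := Finset.filter_subset _ _
  have hKS : ∀ A ∈ K, A ∩ S = u := fun A hA => (Finset.mem_filter.1 hA).2
  have hk1 : 1 ≤ k := by
    obtain ⟨C, hC, hCu⟩ := Finset.mem_image.1 hu
    exact Finset.card_pos.2 ⟨C, Finset.mem_filter.2 ⟨hC, hCu⟩⟩
  have hfe : ∀ x : α, (𝒞.filter fun C => C ∩ S = u ∧ x ∈ C) = K.filter (fun C => x ∈ C) := by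
    intro x
    rw [hK, Finset.filter_filter]
  have hfe' : ∀ x : α, (𝒞.filter fun C => C ∩ S = u ∧ x ∉ C) = K.filter (fun C => x ∉ C) := by
    intro x
    rw [hK, Finset.filter_filter]
  set a : α → ℕ := fun x => #(K.filter (fun C => x ∈ C)) with hadef
  set b : α → ℕ := fun x => #(K.filter (fun C => x ∉ C)) with hbdef
  have hab : ∀ x, a x + b x = k :=
    fun x => Finset.card_filter_add_card_filter_not (fun C => x ∈ C)
  have N1 : ∀ x : α, a x * b x ≤ k * min (a x) (b x) := by
    intro x
    have h := hab x
    rcases Nat.le_total (a x) (b x) with h1 | h1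
    · rw [min_eq_left h1]
      calc a x * b x = b x * a x := Nat.mul_comm _ _
        _ ≤ k * a x := Nat.mul_le_mul_right _ (by omega)
    · rw [min_eq_right h1]
      exact Nat.mul_le_mul_right _ (by omega)
  have N2 : ∑ x ∈ Ω \ S, a x * b x = ∑ A ∈ K, ∑ B ∈ K, #(A \ B) := by
    have step : ∀ x : α, a x * b x
        = ∑ A ∈ K, ∑ B ∈ K, (if x ∈ A ∧ x ∉ B then 1 else 0) := by
      intro x
      simp only [hadef, hbdef]
      rw [Finset.card_filter, Finset.card_filter, Finset.sum_mul_sum]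
      apply Finset.sum_congr rfl
      intro A _
      apply Finset.sum_congr rfl
      intro B _
      by_cases h1 : x ∈ A <;> by_cases h2 : x ∈ B <;> simp [h1, h2]
    rw [Finset.sum_congr rfl (fun x _ => step x), Finset.sum_comm]
    apply Finset.sum_congr rfl
    intro A hA
    rw [Finset.sum_comm]
    apply Finset.sum_congr rfl
    intro B hB
    rw [← Finset.card_filter]
    congr 1
    ext y
    simp only [Finset.mem_filter, Finset.mem_sdiff]
    constructor
    · rintro ⟨-, h1, h2⟩
      exact ⟨h1, h2⟩
    · rintro ⟨h1, h2⟩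
      refine ⟨⟨hsub A (hK𝒞 hA) h1, fun hyS => h2 ?_⟩, h1, h2⟩
      have : y ∈ A ∩ S := Finset.mem_inter.2 ⟨h1, hyS⟩
      rw [hKS A hA] at this
      have : y ∈ B ∩ S := by rw [hKS B hB]; exact this
      exact (Finset.mem_inter.1 this).1
  have hsd : ∀ A B : Finset α, (A ∆ B).card = #(A \ B) + #(B \ A) := by
    intro A B
    rw [symmDiff_def, sup_eq_union, Finset.card_union_of_disjoint (disjoint_sdiff_sdiff)]
  have R3 : D * ((k:ℝ) - 1) * k ≤ 2 * ∑ A ∈ K, ∑ B ∈ K, (#(A \ B) : ℝ) := by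
    have hsym : ∑ A ∈ K, ∑ B ∈ K, (#(A \ B) : ℝ) = ∑ A ∈ K, ∑ B ∈ K, (#(B \ A) : ℝ) :=
      Finset.sum_comm
    have h2 : 2 * ∑ A ∈ K, ∑ B ∈ K, (#(A \ B) : ℝ)
        = ∑ A ∈ K, ∑ B ∈ K, ((A ∆ B).card : ℝ) := by
      rw [two_mul]
      nth_rewrite 2 [hsym]
      rw [← Finset.sum_add_distrib]
      apply Finset.sum_congr rfl
      intro A _
      rw [← Finset.sum_add_distrib]
      apply Finset.sum_congr rfl
      intro B _
      rw [hsd A B]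
      push_cast
      ring
    rw [h2]
    have hinner : ∀ A ∈ K, D * ((k:ℝ) - 1) ≤ ∑ B ∈ K, ((A ∆ B).card : ℝ) := by
      intro A hA
      have : ∑ B ∈ K, (if A ≠ B then D else 0) ≤ ∑ B ∈ K, ((A ∆ B).card : ℝ) := by
        apply Finset.sum_le_sum
        intro B hB
        by_cases hAB : A = B
        · subst hAB
          simp
        · rw [if_pos hAB]
          exact hsep A (hK𝒞 hA) B (hK𝒞 hB) hAB
      refine le_trans (le_of_eq ?_) this
      rw [Finset.sum_ite, Finset.sum_const, Finset.sum_const_zero, add_zero,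
        Finset.filter_ne, Finset.card_erase_of_mem hA, nsmul_eq_mul]
      rw [Nat.cast_sub hk1]
      push_cast
      ring
    calc D * ((k:ℝ) - 1) * k = ∑ _A ∈ K, D * ((k:ℝ) - 1) := by
          rw [Finset.sum_const, nsmul_eq_mul, ← hk]
          ring
      _ ≤ _ := Finset.sum_le_sum hinner
  -- combine
  simp only [hfe, hfe']
  have c1 : (∑ x ∈ Ω \ S, (a x * b x : ℝ)) ≤ (k:ℝ) * ∑ x ∈ Ω \ S, (min (a x) (b x) : ℝ) := by
    rw [Finset.mul_sum]
    apply Finset.sum_le_sum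
    intro x _
    exact_mod_cast N1 x
  have c2 : D * ((k:ℝ) - 1) * k ≤ 2 * ∑ x ∈ Ω \ S, (a x * b x : ℝ) := by
    have : (∑ x ∈ Ω \ S, (a x * b x : ℝ)) = ∑ A ∈ K, ∑ B ∈ K, (#(A \ B) : ℝ) := by
      exact_mod_cast congrArg (Nat.cast : ℕ → ℝ) N2
    rw [this]
    exact R3
  have hkpos : (0:ℝ) < k := by exact_mod_cast hk1
  have h2k : (0:ℝ) < 2 * k := by linarith
  rw [show D / 2 * ((k:ℝ) - 1) = (D * ((k:ℝ) - 1) * k) / (2 * k) by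
    field_simp]
  rw [div_le_iff₀ h2k]
  calc D * ((k:ℝ) - 1) * k ≤ 2 * ∑ x ∈ Ω \ S, (a x * b x : ℝ) := c2
    _ ≤ 2 * ((k:ℝ) * ∑ x ∈ Ω \ S, (min (a x) (b x) : ℝ)) := by linarith
    _ = (∑ x ∈ Ω \ S, (min (a x) (b x) : ℝ)) * (2 * k) := by ring

theorem two_mul_eleven_pow_le {d : ℕ} (hd : 1 ≤ d) : (2 * 11 ^ d : ℕ) ≤ 30 ^ d := by
  induction d with
  | zero => omega
  | succ j ih =>
    rcases Nat.eq_zero_or_pos j with rfl | hj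
    · norm_num
    · have h := ih hj
      calc 2 * 11 ^ (j+1) = 11 * (2 * 11 ^ j) := by ring
        _ ≤ 11 * 30 ^ j := Nat.mul_le_mul_left _ h
        _ ≤ 30 * 30 ^ j := Nat.mul_le_mul_right _ (by norm_num)
        _ = 30 ^ (j+1) := by ring

set_option maxHeartbeats 1000000 in
open scoped symmDiff in
theorem haussler_packing {𝒞 : Finset (Finset α)} {Ω : Finset α} {d : ℕ} {D : ℝ}
    (hsub : ∀ C ∈ 𝒞, C ⊆ Ω)
    (hvc : ∀ s : Finset α, 𝒞.Shatters s → #s ≤ d)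
    (hsep : ∀ C ∈ 𝒞, ∀ C' ∈ 𝒞, C ≠ C' → D ≤ ((C ∆ C').card : ℝ))
    (hD0 : 0 < D) (hDm : D < (#Ω : ℝ)) :
    (#𝒞 : ℝ) ≤ (30 * #Ω / D) ^ d := by
  classical
  set m := #Ω with hm
  set n := #𝒞 with hn
  have hm1 : (1:ℝ) ≤ m := by
    have : (0:ℝ) < m := lt_trans hD0 hDm
    have : 0 < m := by exact_mod_cast this
    exact_mod_cast this
  have hbase : (1:ℝ) < 30 * m / D := by
    rw [lt_div_iff₀ hD0]
    calc (1:ℝ) * D = D := one_mul D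
      _ < m := hDm
      _ ≤ 30 * m := by linarith
  -- trivial d = 0 case
  rcases Nat.eq_zero_or_pos d with rfl | hd1
  · simp only [pow_zero]
    have : ∀ C ∈ 𝒞, ∀ C' ∈ 𝒞, C = C' := by
      intro C hC C' hC'
      by_contra hne
      have hDle := hsep C hC C' hC' hne
      have hpos : 0 < (C ∆ C').card := by
        rcases Nat.eq_zero_or_pos (C ∆ C').card with h | h
        · rw [h] at hDle
          norm_num at hDle
          linarith
        · exact h
      obtain ⟨y, hy⟩ := Finset.card_pos.1 hpos
      rw [Finset.mem_symmDiff] at hy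
      have hshat : 𝒞.Shatters {y} := by
        intro t ht
        rw [Finset.subset_singleton_iff] at ht
        rcases hy with ⟨hyC, hyC'⟩ | ⟨hyC', hyC⟩
        · rcases ht with rfl | rfl
          · exact ⟨C', hC', Finset.singleton_inter_of_notMem hyC'⟩
          · exact ⟨C, hC, Finset.singleton_inter_of_mem hyC⟩
        · rcases ht with rfl | rfl
          · exact ⟨C, hC, Finset.singleton_inter_of_notMem hyC⟩
          · exact ⟨C', hC', Finset.singleton_inter_of_mem hyC'⟩
      have := hvc {y} hshat
      simp at this
    have hcard : n ≤ 1 := Finset.card_le_one.2 this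
    exact_mod_cast hcard
  -- now d ≥ 1
  have hd0R : (0:ℝ) < d := by exact_mod_cast hd1
  by_cases hDcase : D ≤ 8 * d
  · -- small D : use Sauer on the whole ground set
    have himg : 𝒞.image (· ∩ Ω) = 𝒞 := by
      rw [show 𝒞.image (· ∩ Ω) = 𝒞.image id from Finset.image_congr
        (fun C hC => Finset.inter_eq_left.2 (hsub C hC)), Finset.image_id]
    have hSauer : n ≤ ∑ k ∈ Finset.Iic d, m.choose k := by
      rw [hn, ← himg]
      exact card_trace_le Ω hvc
    by_cases hdm : d ≤ m
    · have h1 : ((∑ k ∈ Finset.Iic d, m.choose k : ℕ) : ℝ) ≤ (Real.exp 1 * m / d) ^ d :=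
        sum_choose_le_pow hd1 hdm
      have h2 : Real.exp 1 * m / d ≤ 30 * m / D := by
        rw [div_le_div_iff₀ hd0R hD0]
        have he : Real.exp 1 ≤ 3 := by
          have := Real.exp_one_lt_d9
          linarith
        calc Real.exp 1 * m * D ≤ 3 * m * (8 * d) := by
              apply mul_le_mul
              · apply mul_le_mul_of_nonneg_right he (by linarith)
              · exact hDcase
              · linarith
              · positivity
          _ ≤ 30 * m * d := by nlinarith
      calc (n:ℝ) ≤ ((∑ k ∈ Finset.Iic d, m.choose k : ℕ) : ℝ) := by exact_mod_cast hSauer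
        _ ≤ (Real.exp 1 * m / d) ^ d := h1
        _ ≤ (30 * m / D) ^ d := by
            apply pow_le_pow_left₀ (by positivity) h2
    · -- d > m : crude powerset bound
      push_neg at hdm
      have hpow : n ≤ 2 ^ m := by
        rw [hn, ← Finset.card_powerset]
        apply Finset.card_le_card
        intro C hC
        exact Finset.mem_powerset.2 (hsub C hC)
      have h2 : (2:ℝ) ≤ 30 * m / D := by
        rw [le_div_iff₀ hD0]
        nlinarith
      calc (n:ℝ) ≤ (2:ℝ) ^ m := by exact_mod_cast hpow
        _ ≤ (30 * m / D) ^ m := pow_le_pow_left₀ (by norm_num) h2 m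
        _ ≤ (30 * m / D) ^ d := pow_le_pow_right₀ (by linarith) (le_of_lt hdm)
  · -- main case : D > 8d
    push_neg at hDcase
    set q : ℝ := 4 * d * m / D with hq
    have hq0 : 0 < q := by
      rw [hq]
      have h0m : (0:ℝ) < m := by linarith
      positivity
    set s := ⌈q⌉₊ with hs
    have hsq : q ≤ s := Nat.le_ceil q
    have hsq1 : (s:ℝ) < q + 1 := Nat.ceil_lt_add_one (le_of_lt hq0)
    have hmD : (1:ℝ) < m / D := (one_lt_div hD0).2 hDm
    have h4d : (4 * d : ℝ) < q := by
      rw [hq]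
      calc (4*d:ℝ) = 4 * d * 1 := by ring
        _ < 4 * d * (m / D) := by
            apply mul_lt_mul_of_pos_left hmD (by positivity)
        _ = 4 * d * m / D := by ring
    have hs4d : 4 * d < s := by
      have h := lt_of_lt_of_le h4d hsq
      exact_mod_cast h
    have hs1 : 1 ≤ s := by omega
    have hds : d ≤ s - 1 := by omega
    have hm9 : (9:ℝ) ≤ m := by
      have hd1R : (1:ℝ) ≤ d := by exact_mod_cast hd1
      have h8m : (8:ℝ) < m := by nlinarith
      have h8m' : 8 < m := by exact_mod_cast h8m
      have : 9 ≤ m := h8m'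
      exact_mod_cast this
    have hsm : s ≤ m := by
      have hq2 : q < m / 2 := by
        rw [hq, div_lt_div_iff₀ hD0 two_pos]
        have h0m : (0:ℝ) < m := by linarith
        nlinarith
      have hsmR : (s:ℝ) < (m:ℝ) := by linarith
      exact_mod_cast le_of_lt hsmR
    have hs1m : s - 1 ≤ m := by omega
    set Φ : ℝ := ((∑ k ∈ Finset.Iic d, (s-1).choose k : ℕ) : ℝ) with hΦ
    -- Lower bound per S
    have L1 : ∀ S ∈ Finset.powersetCard (s-1) Ω,
        D / 2 * ((n:ℝ) - #(𝒞.image (· ∩ S))) ≤ ∑ x ∈ Ω \ S, (FF 𝒞 (insert x S) x : ℝ) := by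
      intro S _
      have hsum1 : D / 2 * ((n:ℝ) - #(𝒞.image (· ∩ S)))
          = ∑ u ∈ 𝒞.image (· ∩ S), D / 2 * ((#(𝒞.filter fun C => C ∩ S = u) : ℝ) - 1) := by
        rw [← Finset.mul_sum]
        congr 1
        rw [Finset.sum_sub_distrib, Finset.sum_const, nsmul_eq_mul, mul_one]
        have hnat : ∑ u ∈ 𝒞.image (· ∩ S), #(𝒞.filter fun C => C ∩ S = u) = n :=
          (Finset.card_eq_sum_card_image (· ∩ S) 𝒞).symm
        have : ∑ u ∈ 𝒞.image (· ∩ S), (#(𝒞.filter fun C => C ∩ S = u) : ℝ) = (n:ℝ) := by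
          exact_mod_cast congrArg (Nat.cast (R := ℝ)) hnat
        rw [this]
      rw [hsum1]
      calc ∑ u ∈ 𝒞.image (· ∩ S), D / 2 * ((#(𝒞.filter fun C => C ∩ S = u) : ℝ) - 1)
          ≤ ∑ u ∈ 𝒞.image (· ∩ S), ∑ x ∈ Ω \ S,
              (min (#(𝒞.filter fun C => C ∩ S = u ∧ x ∈ C))
                (#(𝒞.filter fun C => C ∩ S = u ∧ x ∉ C)) : ℝ) :=
            Finset.sum_le_sum (fun u hu => class_lower hsub hsep (le_of_lt hD0) hu)
        _ = ∑ x ∈ Ω \ S, ∑ u ∈ 𝒞.image (· ∩ S),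
              (min (#(𝒞.filter fun C => C ∩ S = u ∧ x ∈ C))
                (#(𝒞.filter fun C => C ∩ S = u ∧ x ∉ C)) : ℝ) := Finset.sum_comm
        _ ≤ ∑ x ∈ Ω \ S, (FF 𝒞 (insert x S) x : ℝ) := by
            apply Finset.sum_le_sum
            intro x hx
            have hxS : x ∉ S := (Finset.mem_sdiff.1 hx).2
            exact_mod_cast Mlow hxS
    -- reindexing
    have L2 : ∑ S ∈ Finset.powersetCard (s-1) Ω, ∑ x ∈ Ω \ S, FF 𝒞 (insert x S) x
        = ∑ T ∈ Finset.powersetCard s Ω, ∑ x ∈ T, FF 𝒞 T x := by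
      rw [Finset.sum_sigma' (Finset.powersetCard (s-1) Ω) (fun S => Ω \ S)
            (fun S x => FF 𝒞 (insert x S) x),
          Finset.sum_sigma' (Finset.powersetCard s Ω) (fun T => T) (fun T x => FF 𝒞 T x)]
      apply Finset.sum_nbij' (fun p => ⟨insert p.2 p.1, p.2⟩) (fun p => ⟨p.1.erase p.2, p.2⟩)
      · rintro ⟨S, x⟩ hp
        rw [Finset.mem_sigma, Finset.mem_powersetCard] at hp
        obtain ⟨⟨hS1, hS2⟩, hx⟩ := hp
        rw [Finset.mem_sdiff] at hx
        rw [Finset.mem_sigma, Finset.mem_powersetCard]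
        refine ⟨⟨Finset.insert_subset hx.1 hS1, ?_⟩, Finset.mem_insert_self _ _⟩
        rw [Finset.card_insert_of_notMem hx.2, hS2]
        omega
      · rintro ⟨T, x⟩ hp
        rw [Finset.mem_sigma, Finset.mem_powersetCard] at hp
        obtain ⟨⟨hT1, hT2⟩, hx⟩ := hp
        rw [Finset.mem_sigma, Finset.mem_powersetCard, Finset.mem_sdiff]
        refine ⟨⟨(Finset.erase_subset _ _).trans hT1, ?_⟩, hT1 hx, Finset.notMem_erase _ _⟩
        rw [Finset.card_erase_of_mem hx, hT2]
      · rintro ⟨S, x⟩ hp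
        rw [Finset.mem_sigma, Finset.mem_sdiff] at hp
        simp only
        rw [Finset.erase_insert hp.2.2]
      · rintro ⟨T, x⟩ hp
        rw [Finset.mem_sigma] at hp
        simp only
        rw [Finset.insert_erase hp.2]
      · rintro ⟨S, x⟩ _
        rfl
    -- Sauer bound on each trace count
    have hΦle : ∀ S ∈ Finset.powersetCard (s-1) Ω, (#(𝒞.image (· ∩ S)) : ℝ) ≤ Φ := by
      intro S hS
      rw [Finset.mem_powersetCard] at hS
      have h := card_trace_le S hvc
      rw [hS.2] at h
      rw [hΦ]
      exact_mod_cast h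
    -- main double counting
    have main : (m.choose (s-1) : ℝ) * (D/2 * ((n:ℝ) - Φ)) ≤ (m.choose s : ℝ) * (d * n) := by
      calc (m.choose (s-1) : ℝ) * (D/2 * ((n:ℝ) - Φ))
          = ∑ _S ∈ Finset.powersetCard (s-1) Ω, D/2 * ((n:ℝ) - Φ) := by
            rw [Finset.sum_const, Finset.card_powersetCard, nsmul_eq_mul]
        _ ≤ ∑ S ∈ Finset.powersetCard (s-1) Ω, D/2 * ((n:ℝ) - #(𝒞.image (· ∩ S))) := by
            apply Finset.sum_le_sum
            intro S hS
            have h := hΦle S hS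
            have hD2 : (0:ℝ) ≤ D/2 := by linarith
            apply mul_le_mul_of_nonneg_left (by linarith) hD2
        _ ≤ ∑ S ∈ Finset.powersetCard (s-1) Ω, ∑ x ∈ Ω \ S, (FF 𝒞 (insert x S) x : ℝ) :=
            Finset.sum_le_sum L1
        _ = ((∑ S ∈ Finset.powersetCard (s-1) Ω, ∑ x ∈ Ω \ S, FF 𝒞 (insert x S) x : ℕ) : ℝ) := by
            push_cast
            rfl
        _ = ((∑ T ∈ Finset.powersetCard s Ω, ∑ x ∈ T, FF 𝒞 T x : ℕ) : ℝ) := by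
            exact_mod_cast congrArg (Nat.cast (R := ℝ)) L2
        _ ≤ ∑ _T ∈ Finset.powersetCard s Ω, ((d * n : ℕ) : ℝ) := by
            push_cast
            apply Finset.sum_le_sum
            intro T _
            exact_mod_cast sum_FF_le hvc T
        _ = (m.choose s : ℝ) * (d * n) := by
            rw [Finset.sum_const, Finset.card_powersetCard, nsmul_eq_mul]
            push_cast
            ring
    -- ratio of binomials
    have hnat : m.choose s * s = m.choose (s-1) * (m - (s-1)) := by
      have h := Nat.choose_succ_right_eq m (s-1)
      rw [show s - 1 + 1 = s from by omega] at h
      exact h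
    have hC1pos : (0:ℝ) < m.choose (s-1) := by
      exact_mod_cast Nat.choose_pos hs1m
    have hspos : (0:ℝ) < s := by exact_mod_cast hs1
    have hms : (m:ℝ)/s ≤ D/(4*d) := by
      rw [div_le_div_iff₀ hspos (by positivity)]
      have h := hsq
      rw [hq, div_le_iff₀ hD0] at h
      linarith
    have hCs_le : (m.choose s : ℝ) ≤ (m.choose (s-1) : ℝ) * (D/(4*d)) := by
      have hcs : (m.choose s : ℝ) = (m.choose (s-1):ℝ) * ((m - (s-1) : ℕ) : ℝ) / s := by
        rw [eq_div_iff (ne_of_gt hspos)]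
        exact_mod_cast hnat
      have hX : ((m - (s-1) : ℕ):ℝ) ≤ m := by
        exact_mod_cast Nat.sub_le m (s-1)
      calc (m.choose s : ℝ) = (m.choose (s-1):ℝ) * (((m - (s-1) : ℕ) : ℝ) / s) := by
            rw [hcs, mul_div_assoc]
        _ ≤ (m.choose (s-1):ℝ) * ((m:ℝ)/s) := by
            apply mul_le_mul_of_nonneg_left _ (le_of_lt hC1pos)
            exact (div_le_div_iff_of_pos_right hspos).2 hX
        _ ≤ (m.choose (s-1):ℝ) * (D/(4*d)) :=
            mul_le_mul_of_nonneg_left hms (le_of_lt hC1pos)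
    have hkey : D/2 * ((n:ℝ) - Φ) ≤ D/4 * n := by
      have h1 : (m.choose (s-1) : ℝ) * (D/2 * ((n:ℝ) - Φ))
          ≤ (m.choose (s-1) : ℝ) * (D/4 * n) := by
        calc (m.choose (s-1) : ℝ) * (D/2 * ((n:ℝ) - Φ)) ≤ (m.choose s : ℝ) * (d * n) := main
          _ ≤ (m.choose (s-1) : ℝ) * (D/(4*d)) * (d * n) := by
              apply mul_le_mul_of_nonneg_right hCs_le (by positivity)
          _ = (m.choose (s-1) : ℝ) * (D/4 * n) := by
              have hdne : (d:ℝ) ≠ 0 := ne_of_gt hd0R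
              rw [mul_assoc]
              congr 1
              field_simp
      exact le_of_mul_le_mul_left h1 hC1pos
    have hn2 : (n:ℝ) ≤ 2*Φ := by
      nlinarith [hkey, hD0]
    -- numeric finish
    have hΦb : Φ ≤ (Real.exp 1 * ((s-1:ℕ):ℝ) / d) ^ d := sum_choose_le_pow hd1 hds
    have hcast : ((s-1 : ℕ):ℝ) = (s:ℝ) - 1 := by
      have h1 : (1:ℕ) ≤ s := hs1
      push_cast [Nat.cast_sub h1]
      ring
    have hsle : ((s-1:ℕ):ℝ) ≤ q := by
      rw [hcast]
      linarith
    have hexp_pos : (0:ℝ) ≤ Real.exp 1 := le_of_lt (Real.exp_pos 1)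
    have hbound : Real.exp 1 * ((s-1:ℕ):ℝ) / d ≤ 4 * Real.exp 1 * (m/D) := by
      calc Real.exp 1 * ((s-1:ℕ):ℝ) / d ≤ Real.exp 1 * q / d := by
            exact (div_le_div_iff_of_pos_right hd0R).2 (mul_le_mul_of_nonneg_left hsle hexp_pos)
        _ = 4 * Real.exp 1 * (m/D) := by
            rw [hq]
            field_simp
    have he11 : 4 * Real.exp 1 ≤ 11 := by
      have := Real.exp_one_lt_d9
      linarith
    have hyp : (0:ℝ) < m/D := by positivity
    have hfin : 2 * (Real.exp 1 * ((s-1:ℕ):ℝ)/d)^d ≤ (30*(m:ℝ)/D)^d := by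
      have h1 : (Real.exp 1 * ((s-1:ℕ):ℝ)/d)^d ≤ (4*Real.exp 1*((m:ℝ)/D))^d :=
        pow_le_pow_left₀ (by positivity) hbound d
      have h2 : 2*(4*Real.exp 1*((m:ℝ)/D))^d ≤ (30*((m:ℝ)/D))^d := by
        calc 2*(4*Real.exp 1*((m:ℝ)/D))^d = 2*(4*Real.exp 1)^d*((m:ℝ)/D)^d := by
              rw [mul_pow]
              ring
          _ ≤ 2*(11:ℝ)^d*((m:ℝ)/D)^d := by
              apply mul_le_mul_of_nonneg_right _ (by positivity)
              apply mul_le_mul_of_nonneg_left (pow_le_pow_left₀ (by positivity) he11 d) (by norm_num)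
          _ ≤ (30:ℝ)^d*((m:ℝ)/D)^d := by
              apply mul_le_mul_of_nonneg_right _ (by positivity)
              have := two_mul_eleven_pow_le hd1
              exact_mod_cast this
          _ = (30*((m:ℝ)/D))^d := by rw [mul_pow]
      have h3 : (30*((m:ℝ)/D)) = 30*(m:ℝ)/D := by ring
      rw [← h3]
      linarith
    calc (n:ℝ) ≤ 2*Φ := hn2
      _ ≤ 2*(Real.exp 1 * ((s-1:ℕ):ℝ)/d)^d := by linarith
      _ ≤ (30*(m:ℝ)/D)^d := hfin

end HausslerPack


open scoped Pointwise symmDiff in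
theorem cov_stL {G : Type*} [Group G] (A B : Set G)
    (hA : A.Finite) (hAne : A.Nonempty) (hB : B.Finite) (hBne : B.Nonempty)
    (d : ℕ) (hd : vcDim (leftFam A B) ≤ (d : ℕ∞))
    (ε : ℝ) (hε0 : 0 < ε) (hε1 : ε < 1) :
    ∃ E ⊆ B, E.Finite ∧
      (E.ncard : ℝ) ≤ (30 * ((B * A).ncard : ℝ) / (ε * A.ncard)) ^ d ∧
      B ⊆ E * stL A ε := by
  classical
  set A' := hA.toFinset with hA'def
  set B' := hB.toFinset with hB'def
  have hA'c : (A' : Set G) = A := hA.coe_toFinset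
  have hB'c : (B' : Set G) = B := hB.coe_toFinset
  set D : ℝ := ε * A.ncard with hDdef
  have hAcard : A.ncard = A'.card := by rw [← hA'c, Set.ncard_coe_finset]
  have hA1 : 1 ≤ A'.card := Finset.card_pos.2 (by
    rw [← Finset.coe_nonempty, hA'c]
    exact hAne)
  have hAcard1 : (1:ℝ) ≤ (A.ncard : ℝ) := by
    rw [hAcard]
    exact_mod_cast hA1
  have hD0 : 0 < D := by
    rw [hDdef]
    nlinarith
  set F : G → Finset G := fun e => A'.image (e * ·) with hFdef
  have hFcoe : ∀ e : G, (F e : Set G) = e • A := by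
    intro e
    rw [hFdef]
    push_cast
    rw [hA'c]
    rfl
  have hFcard : ∀ e e' : G, ((F e ∆ F e').card : ℝ) = (((e • A) ∆ (e' • A)).ncard : ℝ) := by
    intro e e'
    rw [← Set.ncard_coe_finset, Finset.coe_symmDiff, hFcoe, hFcoe]
  have hncard_eq : ∀ e b : G, (((b • A) ∆ (e • A)).ncard) = ((((e⁻¹ * b) • A) ∆ A).ncard) := by
    intro e b
    calc ((b • A) ∆ (e • A)).ncard = (e⁻¹ • ((b • A) ∆ (e • A))).ncard :=
          (Set.ncard_smul_set e⁻¹ _).symm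
      _ = (((e⁻¹ * b) • A) ∆ A).ncard := by
          rw [Set.smul_set_symmDiff, smul_smul, inv_smul_smul]
  have hmem : ∀ e b : G, ((F e ∆ F b).card : ℝ) ≤ D → b ∈ e • stL A ε := by
    intro e b h
    rw [Set.mem_smul_set_iff_inv_smul_mem]
    show ((((e⁻¹ • b) • A) ∆ A).ncard : ℝ) ≤ ε * A.ncard
    rw [smul_eq_mul, ← hncard_eq e b, symmDiff_comm]
    rw [hFcard] at h
    exact h
  -- maximal separated subset of B'
  set P : Finset G → Prop := fun E => ∀ e ∈ E, ∀ e' ∈ E, e ≠ e' → D < ((F e ∆ F e').card : ℝ)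
    with hPdef
  set cands := B'.powerset.filter P with hcands
  have hne : cands.Nonempty := ⟨∅, by
    rw [hcands, Finset.mem_filter, Finset.mem_powerset]
    exact ⟨Finset.empty_subset _, fun e he => absurd he (Finset.notMem_empty e)⟩⟩
  obtain ⟨E', hE'M⟩ := Finset.exists_maximal hne
  have hE'mem : E' ∈ cands := hE'M.1
  have hE'max : ∀ t ∈ cands, ¬ E' ⊂ t := fun t ht hst => hst.2 (hE'M.2 ht hst.1)
  rw [hcands, Finset.mem_filter, Finset.mem_powerset] at hE'mem
  obtain ⟨hE'B, hE'sep⟩ := hE'mem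
  -- covering property
  have hcover : ∀ b ∈ B', ∃ e ∈ E', ((F e ∆ F b).card : ℝ) ≤ D := by
    intro b hb
    by_cases hbE : b ∈ E'
    · refine ⟨b, hbE, ?_⟩
      rw [symmDiff_self]
      simp only [Finset.bot_eq_empty, Finset.card_empty, Nat.cast_zero]
      linarith
    · by_contra hno
      push_neg at hno
      have hnew : insert b E' ∈ cands := by
        rw [hcands, Finset.mem_filter, Finset.mem_powerset]
        refine ⟨Finset.insert_subset hb hE'B, ?_⟩
        intro e he e' he' hnee
        rw [Finset.mem_insert] at he he'
        rcases he with rfl | he <;> rcases he' with rfl | he'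
        · exact absurd rfl hnee
        · rw [symmDiff_comm]
          exact hno e' he'
        · exact hno e he
        · exact hE'sep e he e' he' hnee
      exact hE'max _ hnew (Finset.ssubset_insert hbE)
  -- packing bound
  set Ω : Finset G := B' * A' with hΩdef
  have hmΩ : (B * A).ncard = Ω.card := by
    rw [hΩdef, ← Set.ncard_coe_finset, Finset.coe_mul, hA'c, hB'c]
  have hsub : ∀ C ∈ E'.image F, C ⊆ Ω := by
    intro C hC
    obtain ⟨e, he, rfl⟩ := Finset.mem_image.1 hC
    intro y hy
    rw [hFdef] at hy
    obtain ⟨a, ha, rfl⟩ := Finset.mem_image.1 hy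
    exact Finset.mul_mem_mul (hE'B he) ha
  have hvc : ∀ s : Finset G, (E'.image F).Shatters s → s.card ≤ d := by
    intro s hs
    have hshat : Shatters (leftFam A B) ↑s := by
      intro T hT
      set t := s.filter (fun y => y ∈ T) with htdef
      have htc : (t : Set G) = T := by
        ext y
        simp only [htdef, Finset.coe_filter, Set.mem_setOf_eq, Finset.mem_coe]
        constructor
        · rintro ⟨-, h2⟩
          exact h2
        · intro h
          exact ⟨by exact_mod_cast hT h, h⟩
      obtain ⟨u, hu, hsu⟩ := hs (show t ⊆ s from Finset.filter_subset _ _)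
      obtain ⟨e, heE', rfl⟩ := Finset.mem_image.1 hu
      refine ⟨e • A, ⟨e, ?_, rfl⟩, ?_⟩
      · rw [← hB'c]
        exact hE'B heE'
      · rw [← hFcoe, ← htc, ← Finset.coe_inter, hsu]
    have hv := le_iSup₂ (f := fun (S : Finset G) (_ : Shatters (leftFam A B) ↑S) =>
      (S.card : ℕ∞)) s hshat
    have hv2 := le_trans hv hd
    exact_mod_cast hv2
  have hsep : ∀ C ∈ E'.image F, ∀ C' ∈ E'.image F, C ≠ C' → D ≤ ((C ∆ C').card : ℝ) := by
    intro C hC C' hC' hne'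
    obtain ⟨e, he, rfl⟩ := Finset.mem_image.1 hC
    obtain ⟨e', he', rfl⟩ := Finset.mem_image.1 hC'
    have hee' : e ≠ e' := fun h => hne' (by rw [h])
    exact le_of_lt (hE'sep e he e' he' hee')
  have hDm : D < (Ω.card : ℝ) := by
    have h1 : A'.card ≤ Ω.card := by
      obtain ⟨b₀, hb₀⟩ := Finset.card_pos.1 (Finset.card_pos.2 (by
        rw [← Finset.coe_nonempty, hB'c]
        exact hBne))
      calc A'.card = (A'.image (b₀ * ·)).card :=
            (Finset.card_image_of_injective A' (mul_right_injective b₀)).symm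
        _ ≤ Ω.card := Finset.card_le_card (by
            intro y hy
            obtain ⟨a, ha, rfl⟩ := Finset.mem_image.1 hy
            exact Finset.mul_mem_mul hb₀ ha)
    have h2 : D < (A'.card : ℝ) := by
      rw [hDdef, hAcard]
      have hA1R : (1:ℝ) ≤ (A'.card:ℝ) := by exact_mod_cast hA1
      nlinarith [hA1R, hε1, hε0]
    calc D < (A'.card : ℝ) := h2
      _ ≤ (Ω.card : ℝ) := by exact_mod_cast h1
  have hpack := HausslerPack.haussler_packing hsub hvc hsep hD0 hDm
  have hinj : (E'.image F).card = E'.card := by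
    apply Finset.card_image_of_injOn
    intro e he e' he' hFe
    by_contra hne'
    have := hE'sep e he e' he' hne'
    rw [hFe, symmDiff_self] at this
    simp only [Finset.bot_eq_empty, Finset.card_empty, Nat.cast_zero] at this
    linarith
  refine ⟨(E' : Set G), ?_, E'.finite_toSet, ?_, ?_⟩
  · rw [← hB'c]
    exact_mod_cast hE'B
  · rw [Set.ncard_coe_finset]
    calc (E'.card : ℝ) = ((E'.image F).card : ℝ) := by exact_mod_cast hinj.symm
      _ ≤ (30 * Ω.card / D) ^ d := hpack
      _ = (30 * ((B * A).ncard : ℝ) / (ε * A.ncard)) ^ d := by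
          rw [hmΩ, hDdef]
  · intro b hbB
    obtain ⟨e, heE, hle⟩ := hcover b (by
      rw [← Finset.mem_coe, hB'c]
      exact hbB)
    have hbmem := hmem e b hle
    obtain ⟨y, hy, rfl⟩ := Set.mem_smul_set.1 hbmem
    rw [smul_eq_mul]
    exact Set.mul_mem_mul (Finset.mem_coe.2 heE) hy
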